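/- In a simple directed graph G, if H is the union of all directed paths from a vertex u to a vertex v, H contains no cut vertex separating u from v, and H is not a chain of parallel paths, then H contains at least two internally disjoint u–v paths. -/

import Mathlib

/-- A directed multigraph. -/
structure MultiDigraph where
  V : Type
  E : Type
  src : E → V
  tgt : E → V

namespace MultiDigraph

variable (G : MultiDigraph)

/-- `IsWalkFrom G u v es`: the edge list `es` is a directed walk from `u` to `v`. -/
def IsWalkFrom : G.V → G.V → List G.E → Prop
  | u, v, [] => u = v
  | u, v, e :: es => G.src e = u ∧ IsWalkFrom (G.tgt e) v es

/-- The vertices visited by a walk starting at `u`. -/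
def pathVerts (u : G.V) (es : List G.E) : List G.V := u :: es.map G.tgt

/-- `IsPathFrom G u v es`: `es` is a (simple) directed path from `u` to `v`. -/
def IsPathFrom (u v : G.V) (es : List G.E) : Prop :=
  G.IsWalkFrom u v es ∧ (G.pathVerts u es).Nodup

/-- The internal vertices of a path (all visited vertices except the endpoints). -/
def internals (es : List G.E) : List G.V := (es.map G.tgt).dropLast

/-- The subgraph spanned by a set of edges (on the same vertex set). -/
def edgeSubgraph (S : Set G.E) : MultiDigraph where
  V := G.V
  E := {e // e ∈ S}
  src e := G.src e.val
  tgt e := G.tgt e.val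

/-- The transpose (reverse) of a directed multigraph. -/
def transpose : MultiDigraph := ⟨G.V, G.E, G.tgt, G.src⟩

/-- The set of edges lying on some (simple) directed `u`–`v` path. -/
def pathEdges (u v : G.V) : Set G.E := {e | ∃ es, G.IsPathFrom u v es ∧ e ∈ es}

/-- The union of all directed `u`–`v` paths, as a multidigraph whose vertices are
`u`, `v` and the endpoints of edges lying on some `u`–`v` path. -/
def pathUnion (u v : G.V) : MultiDigraph where
  V := {x // x = u ∨ x = v ∨ ∃ e ∈ G.pathEdges u v, G.src e = x ∨ G.tgt e = x}
  E := {e // e ∈ G.pathEdges u v}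
  src e := ⟨G.src e.val, Or.inr (Or.inr ⟨e.val, e.property, Or.inl rfl⟩)⟩
  tgt e := ⟨G.tgt e.val, Or.inr (Or.inr ⟨e.val, e.property, Or.inr rfl⟩)⟩

/-- `u` is a vertex of `pathUnion G u v`. -/
theorem mem_pathUnion_left (u v : G.V) :
    (u = u ∨ u = v ∨ ∃ e ∈ G.pathEdges u v, G.src e = u ∨ G.tgt e = u) := Or.inl rfl

theorem mem_pathUnion_right (u v : G.V) :
    (v = u ∨ v = v ∨ ∃ e ∈ G.pathEdges u v, G.src e = v ∨ G.tgt e = v) := Or.inr (Or.inl rfl)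

/-- A chain of parallel links from `s` to `t`: vertices `v₀ = s, …, v_m = t` in a line,
every edge goes from some `v_i` to `v_{i+1}`, and every consecutive pair is joined by
at least one edge. -/
def IsChainOfParallelLinks (s t : G.V) : Prop :=
  ∃ (m : ℕ) (v : ℕ → G.V), 0 < m ∧ v 0 = s ∧ v m = t ∧
    (∀ i j, i ≤ m → j ≤ m → v i = v j → i = j) ∧
    (∀ x : G.V, ∃ i, i ≤ m ∧ v i = x) ∧
    (∀ e : G.E, ∃ i, i < m ∧ G.src e = v i ∧ G.tgt e = v (i + 1)) ∧
    (∀ i, i < m → ∃ e : G.E, G.src e = v i ∧ G.tgt e = v (i + 1))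

end MultiDigraph

open MultiDigraph

/-- `IsSubdivisionWith G H φ`: `G` is a subdivision of `H`, where `φ` embeds the
branch vertices of `H` into `G` and each `H`-edge corresponds to a nontrivial path
in `G`; the paths are internally disjoint, edge-disjoint, their internal vertices
avoid branch vertices, and together they exhaust all vertices and edges of `G`. -/
def IsSubdivisionWith (G H : MultiDigraph) (φ : H.V → G.V) : Prop :=
  ∃ P : H.E → List G.E,
    Function.Injective φ ∧
    (∀ e, G.IsPathFrom (φ (H.src e)) (φ (H.tgt e)) (P e) ∧ P e ≠ []) ∧
    (∀ e, ∀ x ∈ G.internals (P e), x ∉ Set.range φ) ∧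
    (∀ e f, e ≠ f → ∀ x ∈ G.internals (P e), x ∉ G.internals (P f)) ∧
    (∀ e f, e ≠ f → ∀ a ∈ P e, a ∉ P f) ∧
    (∀ a : G.E, ∃ e, a ∈ P e) ∧
    (∀ x : G.V, x ∈ Set.range φ ∨ ∃ e, x ∈ G.internals (P e))

/-- `H` is a topological minor of `G`: branch vertices of `H` embed injectively into
`G` and the edges of `H` are realized by internally disjoint, edge-disjoint paths
of `G` avoiding branch vertices internally. -/
def IsTopMinorOf (H G : MultiDigraph) : Prop :=
  ∃ (φ : H.V → G.V) (P : H.E → List G.E),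
    Function.Injective φ ∧
    (∀ e, G.IsPathFrom (φ (H.src e)) (φ (H.tgt e)) (P e) ∧ P e ≠ []) ∧
    (∀ e, ∀ x ∈ G.internals (P e), x ∉ Set.range φ) ∧
    (∀ e f, e ≠ f → ∀ x ∈ G.internals (P e), x ∉ G.internals (P f)) ∧
    (∀ e f, e ≠ f → ∀ a ∈ P e, a ∉ P f)

/-- A chain of parallel paths from `s` to `t`: a subdivision of a chain of
parallel links, with `s` and `t` the images of the endpoints. -/
def IsChainOfParallelPaths (G : MultiDigraph) (s t : G.V) : Prop :=
  ∃ (H : MultiDigraph) (s' t' : H.V) (φ : H.V → G.V),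
    H.IsChainOfParallelLinks s' t' ∧ IsSubdivisionWith G H φ ∧ φ s' = s ∧ φ t' = t

/-- `G` uses only chains of parallel paths: for every ordered pair `(u, v)`,
either there is no (nontrivial) `u`–`v` path, or the union of all `u`–`v` paths
is a chain of parallel paths from `u` to `v`. -/
def UsesOnlyChains (G : MultiDigraph) : Prop :=
  ∀ u v : G.V,
    (¬ ∃ es, G.IsPathFrom u v es ∧ es ≠ []) ∨
    IsChainOfParallelPaths (G.pathUnion u v)
      ⟨u, G.mem_pathUnion_left u v⟩ ⟨v, G.mem_pathUnion_right u v⟩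

/-- The vertex `u` viewed in the union of all `u`–`v` paths. -/
def MultiDigraph.puSrc (G : MultiDigraph) (u v : G.V) : (G.pathUnion u v).V :=
  ⟨u, G.mem_pathUnion_left u v⟩

/-- The vertex `v` viewed in the union of all `u`–`v` paths. -/
def MultiDigraph.puTgt (G : MultiDigraph) (u v : G.V) : (G.pathUnion u v).V :=
  ⟨v, G.mem_pathUnion_right u v⟩


section MengerAux
open MultiDigraph
variable {D : MultiDigraph}

theorem pathVerts_length (u : D.V) (es : List D.E) : (D.pathVerts u es).length = es.length + 1 := by
  simp [MultiDigraph.pathVerts]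

theorem pathVerts_getElem_succ (u : D.V) (es : List D.E) (i : ℕ) (hi : i < es.length) :
    (D.pathVerts u es)[i+1]'(by simp [MultiDigraph.pathVerts]; omega) = D.tgt (es[i]'hi) := by
  simp [MultiDigraph.pathVerts]

theorem pathVerts_getElem_zero (u : D.V) (es : List D.E) :
    (D.pathVerts u es)[0]'(by simp [MultiDigraph.pathVerts]) = u := by
  simp [MultiDigraph.pathVerts]

theorem walk_src_getElem : ∀ (es : List D.E) (u v : D.V), D.IsWalkFrom u v es →
    ∀ i, (hi : i < es.length) →
    D.src (es[i]'hi) = (D.pathVerts u es)[i]'(by simp [MultiDigraph.pathVerts]; omega)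
  | [], u, v, h, i, hi => absurd hi (by simp)
  | e :: es, u, v, h, 0, hi => by
      simp [MultiDigraph.pathVerts, h.1]
  | e :: es, u, v, h, (i+1), hi => by
      have := walk_src_getElem es (D.tgt e) v h.2 i (by simpa using hi)
      simpa [MultiDigraph.pathVerts] using this

theorem walk_last_getElem : ∀ (es : List D.E) (u v : D.V), D.IsWalkFrom u v es →
    (D.pathVerts u es)[es.length]'(by simp [MultiDigraph.pathVerts]) = v
  | [], u, v, h => by simp [MultiDigraph.pathVerts]; exact h
  | e :: es, u, v, h => by
      have := walk_last_getElem es (D.tgt e) v h.2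
      simpa [MultiDigraph.pathVerts] using this


theorem exists_inj_walk {α : Type*} {R : α → α → Prop} {a b : α}
    (h : Relation.ReflTransGen R a b) :
    ∃ (L : ℕ) (g : ℕ → α), g 0 = a ∧ g L = b ∧ (∀ i, i < L → R (g i) (g (i+1))) ∧
      (∀ i j, i ≤ L → j ≤ L → g i = g j → i = j) := by
  obtain ⟨L, g, hg0, hgL, hstep⟩ :
      ∃ (L : ℕ) (g : ℕ → α), g 0 = a ∧ g L = b ∧ ∀ i, i < L → R (g i) (g (i+1)) := by
    induction h with
    | refl => exact ⟨0, fun _ => a, rfl, rfl, fun i hi => absurd hi (by omega)⟩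
    | @tail b' c hab hbc ih =>
        obtain ⟨L, g, hg0, hgL, hstep⟩ := ih
        refine ⟨L+1, fun i => if i ≤ L then g i else c, by simp [hg0], by simp, ?_⟩
        intro i hi
        rcases Nat.lt_or_ge i L with h1 | h1
        · simpa [Nat.le_of_lt h1, Nat.succ_le_of_lt h1] using hstep i h1
        · have hiL : i = L := by omega
          subst hiL
          simpa [hgL] using hbc
  clear h
  induction L using Nat.strong_induction_on generalizing g with
  | _ L ih =>
    by_cases hdup : ∃ i j, i < j ∧ j ≤ L ∧ g i = g j
    · obtain ⟨i, j, hij, hjL, he⟩ := hdup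
      set d := j - i with hd
      have hd1 : 1 ≤ d := by omega
      refine ih (L - d) (by omega) (fun m => if m < i then g m else g (m + d)) ?_ ?_ ?_
      · show (if 0 < i then g 0 else g (0 + d)) = a
        by_cases h1 : 0 < i
        · simpa [h1] using hg0
        · have hi0 : i = 0 := by omega
          subst hi0
          simp only [lt_self_iff_false, if_false, Nat.zero_add]
          rw [show d = j from by omega, ← he, hg0]
      · show (if L - d < i then g (L - d) else g (L - d + d)) = b
        have h1 : ¬ (L - d < i) := by omega
        rw [if_neg h1, show L - d + d = L from by omega, hgL]
      · intro m hm
        show R (if m < i then g m else g (m + d)) (if m + 1 < i then g (m+1) else g (m + 1 + d))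
        by_cases h1 : m < i
        · by_cases h2 : m + 1 < i
          · rw [if_pos h1, if_pos h2]; exact hstep m (by omega)
          · have hmi : m + 1 = i := by omega
            rw [if_pos h1, if_neg h2, show m + 1 + d = j from by omega, ← he, ← hmi]
            exact hstep m (by omega)
        · rw [if_neg h1, if_neg (show ¬ m + 1 < i from by omega)]
          have := hstep (m + d) (by omega)
          rwa [show m + d + 1 = m + 1 + d from by omega] at this
    · push_neg at hdup
      refine ⟨L, g, hg0, hgL, hstep, ?_⟩
      intro i j hi hj hgij
      by_contra hne
      rcases Nat.lt_or_ge i j with h1 | h1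
      · exact hdup i j h1 hj hgij
      · have h2 : j < i := by omega
        exact hdup j i (by omega) hi hgij.symm

theorem extract_two_paths (D : MultiDigraph) (u v : D.V) (huv : u ≠ v)
    (T : Set D.E) (hfin : T.Finite)
    (hT2 : ∀ e ∈ T, ∀ f ∈ T, D.tgt e = D.tgt f → D.tgt e ≠ v → e = f)
    (hT3 : ∀ e ∈ T, D.tgt e ≠ u)
    (hT5 : ∀ e ∈ T, D.tgt e ≠ v → ∃ f, f ∈ T ∧ D.src f = D.tgt e)
    (e₀ f₀ : D.E) (he₀ : e₀ ∈ T) (hf₀ : f₀ ∈ T) (hsrce₀ : D.src e₀ = u)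
    (hsrcf₀ : D.src f₀ = u) (hne : e₀ ≠ f₀) :
    ∃ es₁ es₂ : List D.E,
      D.IsPathFrom u v es₁ ∧ D.IsPathFrom u v es₂ ∧ es₁ ≠ es₂ ∧
      (∀ e ∈ es₁, e ∈ T) ∧ (∀ e ∈ es₂, e ∈ T) ∧
      ∀ x ∈ D.internals es₁, x ∉ D.internals es₂ := by
  classical
  set nxt : D.E → D.E := fun e =>
    if h : ∃ f, f ∈ T ∧ D.src f = D.tgt e then h.choose else e with hnxt
  set s : D.E → ℕ → D.E := fun a k => nxt^[k] a with hs
  have hs0 : ∀ a, s a 0 = a := fun a => rfl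
  have hssucc : ∀ a k, s a (k+1) = nxt (s a k) := by
    intro a k; simp [hs, Function.iterate_succ_apply']
  have hnxtspec : ∀ e ∈ T, D.tgt e ≠ v → nxt e ∈ T ∧ D.src (nxt e) = D.tgt e := by
    intro e he hv
    have h := hT5 e he hv
    simp only [hnxt, dif_pos h]
    exact h.choose_spec
  -- basic invariant
  have goodA : ∀ a, a ∈ T → ∀ k, (∀ j, j < k → D.tgt (s a j) ≠ v) →
      (s a k ∈ T ∧ ∀ j, j < k → D.src (s a (j+1)) = D.tgt (s a j)) := by
    intro a ha k
    induction k with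
    | zero => exact fun _ => ⟨ha, fun j hj => absurd hj (by omega)⟩
    | succ k ihk =>
        intro hk
        have ih := ihk (fun j hj => hk j (by omega))
        have hkv : D.tgt (s a k) ≠ v := hk k (by omega)
        have hh := hnxtspec (s a k) ih.1 hkv
        rw [← hssucc] at hh
        refine ⟨hh.1, ?_⟩
        intro j hj
        rcases Nat.lt_or_ge j k with h1 | h1
        · exact ih.2 j h1
        · have hjk : j = k := by omega
          subst hjk
          exact hh.2
  -- descent lemma: two runs cannot merge
  have descend : ∀ (a b' : D.E) (ka kb : ℕ), a ∈ T → b' ∈ T →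
      D.src a = u → D.src b' = u →
      (∀ j, j < ka → D.tgt (s a j) ≠ v) → (∀ j, j < kb → D.tgt (s b' j) ≠ v) →
      (∀ j, j ≤ ka → s a j ∈ T) → (∀ j, j ≤ kb → s b' j ∈ T) →
      (∀ j, j < ka → D.src (s a (j+1)) = D.tgt (s a j)) →
      (∀ j, j < kb → D.src (s b' (j+1)) = D.tgt (s b' j)) →
      ∀ j j', j ≤ ka → j' ≤ kb → (j ≠ j' ∨ (a = b' → False)) → s a j = s b' j' → False := by
    intro a b' ka kb ha hb hsa hsb hva hvb hTa hTb hla hlb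
    intro j
    induction j using Nat.strong_induction_on with
    | _ j ihj =>
      intro j' hj hj' hne0 heq
      by_cases hj0 : j = 0
      · subst hj0
        by_cases hj'0 : j' = 0
        · subst hj'0
          rcases hne0 with h | h
          · exact h rfl
          · exact h (by rw [hs0, hs0] at heq; exact heq)
        · obtain ⟨m, rfl⟩ : ∃ m, j' = m + 1 := ⟨j'-1, by omega⟩
          have h1 : D.src (s b' (m+1)) = u := by rw [← heq, hs0, hsa]
          rw [hlb m (by omega)] at h1
          exact hT3 _ (hTb m (by omega)) h1
      · obtain ⟨t, rfl⟩ : ∃ t, j = t + 1 := ⟨j-1, by omega⟩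
        by_cases hj'0 : j' = 0
        · subst hj'0
          have h1 : D.src (s a (t+1)) = u := by rw [heq, hs0, hsb]
          rw [hla t (by omega)] at h1
          exact hT3 _ (hTa t (by omega)) h1
        · obtain ⟨m, rfl⟩ : ∃ m, j' = m + 1 := ⟨j'-1, by omega⟩
          have h1 : D.src (s a (t+1)) = D.src (s b' (m+1)) := by rw [heq]
          rw [hla t (by omega), hlb m (by omega)] at h1
          have h2 := hT2 _ (hTa t (by omega)) _ (hTb m (by omega)) h1 (hva t (by omega))
          refine ihj t (by omega) m (by omega) (by omega) ?_ h2
          rcases hne0 with h | h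
          · exact Or.inl (by omega)
          · exact Or.inr h
  -- termination
  have term : ∀ a, a ∈ T → D.src a = u →
      ∃ k, D.tgt (s a k) = v ∧ ∀ j, j < k → D.tgt (s a j) ≠ v := by
    intro a ha hsrc
    by_cases hex : ∃ k, D.tgt (s a k) = v
    · exact ⟨Nat.find hex, Nat.find_spec hex, fun j hj => Nat.find_min hex hj⟩
    · exfalso
      push_neg at hex
      have inT : ∀ k, s a k ∈ T := fun k => (goodA a ha k (fun j _ => hex j)).1
      have links : ∀ k, D.src (s a (k+1)) = D.tgt (s a k) := by
        intro k
        exact (goodA a ha (k+1) (fun j _ => hex j)).2 k (by omega)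
      have hinj : ∀ k k', k < k' → s a k = s a k' → False := by
        intro k k' hkk' heq
        -- use descend with a = b'
        exact descend a a k' k' ha ha hsrc hsrc
          (fun j _ => hex j) (fun j _ => hex j) (fun j _ => inT j) (fun j _ => inT j)
          (fun j _ => links j) (fun j _ => links j) k k' (by omega) (by omega)
          (Or.inl (by omega)) heq
      have hi2 : Function.Injective (s a) := by
        intro k k' h
        by_contra hne2
        rcases Nat.lt_or_ge k k' with h1 | h1
        · exact hinj k k' h1 h
        · exact hinj k' k (by omega) h.symm
      exact (Set.infinite_of_injective_forall_mem hi2 inT) hfin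
  -- build a path from a start edge
  have build : ∀ a, a ∈ T → D.src a = u →
      ∃ k₀ : ℕ, D.tgt (s a k₀) = v ∧ (∀ j, j < k₀ → D.tgt (s a j) ≠ v) ∧
        (∀ j, j ≤ k₀ → s a j ∈ T) ∧ (∀ j, j < k₀ → D.src (s a (j+1)) = D.tgt (s a j)) ∧
        D.IsPathFrom u v ((List.range (k₀+1)).map (s a)) := by
    intro a ha hsrc
    obtain ⟨k₀, hkv, hkmin⟩ := term a ha hsrc
    have inT : ∀ j, j ≤ k₀ → s a j ∈ T := by
      intro j hj
      exact (goodA a ha j (fun t ht => hkmin t (by omega))).1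
    have links : ∀ j, j < k₀ → D.src (s a (j+1)) = D.tgt (s a j) :=
      (goodA a ha k₀ (fun t ht => hkmin t ht)).2
    have tgtinj : ∀ j j', j < j' → j' ≤ k₀ → D.tgt (s a j) = D.tgt (s a j') → False := by
      intro j j' hjj' hj' heq
      have hjne : D.tgt (s a j) ≠ v := hkmin j (by omega)
      have h2 := hT2 _ (inT j (by omega)) _ (inT j' hj') heq hjne
      exact descend a a k₀ k₀ ha ha hsrc hsrc hkmin hkmin inT inT links links
        j j' (by omega) (by omega) (Or.inl (by omega)) h2
    refine ⟨k₀, hkv, hkmin, inT, links, ?_, ?_⟩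
    · -- walk
      have mk_walk : ∀ (n : ℕ) (f : ℕ → D.E) (w : D.V), 0 < n → D.src (f 0) = w →
          (∀ j, j+1 < n → D.src (f (j+1)) = D.tgt (f j)) → D.tgt (f (n-1)) = v →
          D.IsWalkFrom w v ((List.range n).map f) := by
        intro n
        induction n with
        | zero => omega
        | succ n ihn =>
            intro f w _ h0 hlinks hlast
            rw [List.range_succ_eq_map]
            by_cases hn : n = 0
            · subst hn
              simpa [MultiDigraph.IsWalkFrom, h0] using hlast
            · simp only [List.map_cons, List.map_map]
              refine ⟨h0, ?_⟩
              have hrest := ihn (f ∘ Nat.succ) (D.tgt (f 0)) (by omega)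
                (hlinks 0 (by omega)) (fun j hj => hlinks (j+1) (by omega)) (by
                  show D.tgt (f (n - 1 + 1)) = v
                  rw [show n - 1 + 1 = n from by omega]
                  simpa using hlast)
              simpa using hrest
      exact mk_walk (k₀+1) (s a) u (by omega) (by rw [hs0, hsrc])
        (fun j hj => links j (by omega)) (by simpa using hkv)
    · -- nodup
      show (D.pathVerts u ((List.range (k₀+1)).map (s a))).Nodup
      rw [MultiDigraph.pathVerts, List.map_map]
      refine List.Nodup.cons ?_ ?_
      · intro hu
        obtain ⟨j, hj, hju⟩ := List.mem_map.mp hu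
        rw [List.mem_range] at hj
        exact hT3 _ (inT j (by omega)) hju
      · refine List.Nodup.map_on ?_ List.nodup_range
        intro j hj j' hj' heq
        rw [List.mem_range] at hj hj'
        by_contra hne2
        rcases Nat.lt_or_ge j j' with h1 | h1
        · exact tgtinj j j' h1 (by omega) heq
        · exact tgtinj j' j (by omega) (by omega) heq.symm
  obtain ⟨k₁, hk₁v, hk₁min, hk₁T, hk₁links, hk₁path⟩ := build e₀ he₀ hsrce₀
  obtain ⟨k₂, hk₂v, hk₂min, hk₂T, hk₂links, hk₂path⟩ := build f₀ hf₀ hsrcf₀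
  have cross : ∀ j j', j ≤ k₁ → j' ≤ k₂ → s e₀ j = s f₀ j' → False := by
    intro j j' hj hj' heq
    exact descend e₀ f₀ k₁ k₂ he₀ hf₀ hsrce₀ hsrcf₀ hk₁min hk₂min hk₁T hk₂T
      hk₁links hk₂links j j' hj hj' (Or.inr fun h => hne h) heq
  refine ⟨(List.range (k₁+1)).map (s e₀), (List.range (k₂+1)).map (s f₀),
    hk₁path, hk₂path, ?_, ?_, ?_, ?_⟩
  · intro heq
    have h1 : ((List.range (k₁+1)).map (s e₀)).head? = some e₀ := by
      rw [List.range_succ_eq_map]; simp [hs0]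
    have h2 : ((List.range (k₂+1)).map (s f₀)).head? = some f₀ := by
      rw [List.range_succ_eq_map]; simp [hs0]
    rw [heq, h2] at h1
    exact hne (Option.some_injective _ h1.symm)
  · intro e he
    obtain ⟨j, hj, hje⟩ := List.mem_map.mp he
    rw [List.mem_range] at hj
    exact hje ▸ hk₁T j (by omega)
  · intro e he
    obtain ⟨j, hj, hje⟩ := List.mem_map.mp he
    rw [List.mem_range] at hj
    exact hje ▸ hk₂T j (by omega)
  · -- internal disjointness
    have hdl : ∀ (f : ℕ → D.V) (n : ℕ),
        ((List.range (n+1)).map f).dropLast = (List.range n).map f := by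
      intro f n
      rw [List.range_succ, List.map_append]
      simp
    intro x hx hx'
    rw [MultiDigraph.internals, List.map_map, hdl] at hx hx'
    obtain ⟨j, hj, hjx⟩ := List.mem_map.mp hx
    obtain ⟨j', hj', hjx'⟩ := List.mem_map.mp hx'
    rw [List.mem_range] at hj hj'
    have heq : D.tgt (s e₀ j) = D.tgt (s f₀ j') := hjx.trans hjx'.symm
    have hxv : D.tgt (s e₀ j) ≠ v := hk₁min j hj
    have h2 := hT2 _ (hk₁T j (by omega)) _ (hk₂T j' (by omega)) heq hxv
    exact cross j j' (by omega) (by omega) h2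

theorem menger_two (D : MultiDigraph) (u v : D.V) (huv : u ≠ v)
    (hsimple : ∀ e f : D.E, D.src e = D.src f → D.tgt e = D.tgt f → e = f)
    (hnoloop : ∀ e : D.E, D.src e ≠ D.tgt e)
    (hnodirect : ¬ ∃ e : D.E, D.src e = u ∧ D.tgt e = v)
    (hconn : ∃ es, D.IsPathFrom u v es ∧ es ≠ [])
    (hcut : ∀ w : D.V, w ≠ u → w ≠ v → ∃ es, D.IsPathFrom u v es ∧ w ∉ D.pathVerts u es) :
    ∃ es₁ es₂ : List D.E,
      D.IsPathFrom u v es₁ ∧ D.IsPathFrom u v es₂ ∧ es₁ ≠ es₂ ∧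
      ∀ x ∈ D.internals es₁, x ∉ D.internals es₂ := by
  classical
  obtain ⟨p, hp, hpne⟩ := hconn
  set n := p.length with hn
  have hn0 : 0 < n := by
    cases p with
    | nil => exact absurd rfl hpne
    | cons e t => simp [hn]
  -- vertex and edge indexing of the path p
  set x : ℕ → D.V := fun i => (D.pathVerts u p).getD i v with hxdef
  set pdg : ℕ → D.E := fun i => p.getD i (p.head hpne) with hpdgdef
  have hlenpv : (D.pathVerts u p).length = n + 1 := by rw [pathVerts_length, hn]
  have hxe : ∀ i (hi : i ≤ n), x i = (D.pathVerts u p)[i]'(by omega) := by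
    intro i hi
    exact List.getD_eq_getElem _ _ (by omega)
  have hpe : ∀ i (hi : i < n), pdg i = p[i]'(by omega) := by
    intro i hi
    exact List.getD_eq_getElem _ _ (by omega)
  have hx0 : x 0 = u := by
    rw [hxe 0 (by omega), pathVerts_getElem_zero]
  have hxn : x n = v := by
    rw [hxe n (by omega)]
    exact walk_last_getElem p u v hp.1
  have hsrcx : ∀ i, i < n → D.src (pdg i) = x i := by
    intro i hi
    rw [hpe i hi, hxe i (by omega)]
    exact walk_src_getElem p u v hp.1 i (by omega)
  have htgtx : ∀ i, i < n → D.tgt (pdg i) = x (i+1) := by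
    intro i hi
    rw [hpe i hi, hxe (i+1) (by omega)]
    exact (pathVerts_getElem_succ u p i (by omega)).symm
  have hxinj : ∀ i j, i ≤ n → j ≤ n → x i = x j → i = j := by
    intro i j hi hj hxy
    rw [hxe i hi, hxe j hj] at hxy
    exact (hp.2.getElem_inj_iff).mp hxy
  have hpmem : ∀ i, i < n → pdg i ∈ p := by
    intro i hi
    rw [hpe i hi]
    exact List.getElem_mem _
  have hpidx : ∀ e, e ∈ p → ∃ k, k < n ∧ e = pdg k := by
    intro e he
    obtain ⟨k, hk, hek⟩ := List.mem_iff_getElem.mp he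
    exact ⟨k, by omega, by rw [hpe k (by omega)]; exact hek.symm⟩
  have hint : ∀ w, w ∈ D.internals p ↔ ∃ m, 1 ≤ m ∧ m ≤ n - 1 ∧ w = x m := by
    intro w
    rw [MultiDigraph.internals]
    constructor
    · intro hw
      obtain ⟨k, hk, hwk⟩ := List.mem_iff_getElem.mp hw
      have hklen : k < n - 1 := by
        have := hk
        rw [List.length_dropLast, List.length_map] at this
        omega
      refine ⟨k + 1, by omega, by omega, ?_⟩
      rw [← hwk]
      rw [List.getElem_dropLast, List.getElem_map]
      rw [← htgtx k (by omega), hpe k (by omega)]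
    · rintro ⟨m, hm1, hmn, rfl⟩
      rw [List.mem_iff_getElem]
      refine ⟨m - 1, ?_, ?_⟩
      · rw [List.length_dropLast, List.length_map]
        omega
      · rw [List.getElem_dropLast, List.getElem_map]
        rw [← hpe (m-1) (by omega), htgtx (m-1) (by omega)]
        congr 1
        omega
  have hn2 : 2 ≤ n := by
    by_contra hcon
    have hn1 : n = 1 := by omega
    apply hnodirect
    refine ⟨pdg 0, ?_, ?_⟩
    · rw [hsrcx 0 (by omega), hx0]
    · rw [htgtx 0 (by omega), show (0:ℕ)+1 = n from by omega, hxn]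
  have hu_not_int : u ∉ D.internals p := by
    intro hu
    obtain ⟨m, hm1, hmn, hum⟩ := (hint u).mp hu
    have := hxinj 0 m (by omega) (by omega) (by rw [hx0, hum])
    omega
  have hv_not_int : v ∉ D.internals p := by
    intro hv
    obtain ⟨m, hm1, hmn, hvm⟩ := (hint v).mp hv
    have := hxinj n m (by omega) (by omega) (by rw [hxn, hvm])
    omega
  have hxm_int : ∀ m, 1 ≤ m → m ≤ n - 1 → x m ∈ D.internals p := by
    intro m h1 h2
    exact (hint (x m)).mpr ⟨m, h1, h2, rfl⟩
  -- the residual arc relation for the path p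
  set Arc : (D.V × Bool) → (D.V × Bool) → Prop := fun nd nd' =>
    (nd.2 = true ∧ nd'.2 = false ∧
      ((∃ e : D.E, D.src e = nd.1 ∧ D.tgt e = nd'.1) ∨
        (nd.1 = nd'.1 ∧ nd.1 ∈ D.internals p))) ∨
    (nd.2 = false ∧ nd'.2 = true ∧
      ((∃ e, e ∈ p ∧ D.tgt e = nd.1 ∧ D.src e = nd'.1) ∨
        (nd.1 = nd'.1 ∧ nd.1 ∉ D.internals p))) with hArc
  set Reach : (D.V × Bool) → Prop := fun nd => Relation.ReflTransGen Arc (u, true) nd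
    with hReach
  -- Case 2: if (v, in) is not reachable, there is a cut vertex, contradiction.
  have hreach : Reach (v, false) := by
    by_contra hnr
    set CC : D.V → Prop := fun w =>
      w ∈ D.internals p ∧ Reach (w, false) ∧ ¬ Reach (w, true) with hCC
    -- every u-v path contains a CC vertex
    have aux : ∀ (q : List D.E) (a : D.V), D.IsWalkFrom a v q →
        ((a = v → Reach (a, false)) ∧ (a ≠ v → Reach (a, true))) →
        (∀ w ∈ q.map D.tgt, w = v ∨ ¬ CC w) → Reach (v, false) := by
      intro q
      induction q with
      | nil =>
          intro a hw hra _
          have hav : a = v := hw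
          exact hav ▸ (hra.1 hav)
      | cons e tl ih =>
          intro a hw hra hcc
          by_cases hav : a = v
          · exact hav ▸ (hra.1 hav)
          · have hrt : Reach (a, true) := hra.2 hav
            have harc : Arc (a, true) (D.tgt e, false) := by
              rw [hArc]
              exact Or.inl ⟨rfl, rfl, Or.inl ⟨e, hw.1, rfl⟩⟩
            have hrf : Reach (D.tgt e, false) := Relation.ReflTransGen.tail hrt harc
            have hmem : D.tgt e ∈ (e :: tl).map D.tgt := by simp
            rcases hcc _ hmem with htv | hncc
            · exact htv ▸ hrf
            · have hrt' : Reach (D.tgt e, true) := by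
                by_cases hi : D.tgt e ∈ D.internals p
                · by_contra hnt
                  exact hncc ⟨hi, hrf, hnt⟩
                · exact Relation.ReflTransGen.tail hrf (by
                    rw [hArc]; exact Or.inr ⟨rfl, rfl, Or.inr ⟨rfl, hi⟩⟩)
              exact ih (D.tgt e) hw.2 ⟨fun _ => hrf, fun _ => hrt'⟩
                (fun w hw' => hcc w (by simp [hw']))
    have hCCex : ∀ q, D.IsPathFrom u v q → ∃ w, w ∈ D.pathVerts u q ∧ CC w := by
      intro q hq
      by_contra hno
      push_neg at hno
      refine hnr (aux q u hq.1 ⟨fun h => absurd h huv, fun _ => Relation.ReflTransGen.refl⟩ ?_)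
      intro w hwm
      by_cases hwv : w = v
      · exact Or.inl hwv
      · refine Or.inr (hno w ?_)
        rw [MultiDigraph.pathVerts]
        exact List.mem_cons_of_mem _ hwm
    -- reverse and back steps along p
    have stepRev : ∀ j, 1 ≤ j → j ≤ n → Reach (x j, false) → Reach (x (j-1), true) := by
      intro j h1 h2 hr
      refine Relation.ReflTransGen.tail hr ?_
      rw [hArc]
      refine Or.inr ⟨rfl, rfl, Or.inl ⟨pdg (j-1), hpmem (j-1) (by omega), ?_, ?_⟩⟩
      · rw [htgtx (j-1) (by omega)]
        congr 1
        omega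
      · rw [hsrcx (j-1) (by omega)]
    have stepBack : ∀ j, 1 ≤ j → j ≤ n - 1 → Reach (x j, true) → Reach (x j, false) := by
      intro j h1 h2 hr
      refine Relation.ReflTransGen.tail hr ?_
      rw [hArc]
      exact Or.inl ⟨rfl, rfl, Or.inr ⟨rfl, hxm_int j h1 h2⟩⟩
    have desc : ∀ d t, 1 ≤ t → t + 1 + d ≤ n → Reach (x (t + 1 + d), false) →
        Reach (x t, true) := by
      intro d
      induction d with
      | zero =>
          intro t h1 h2 hr
          have := stepRev (t+1) (by omega) (by omega) (by simpa using hr)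
          simpa using this
      | succ d ihd =>
          intro t h1 h2 hr
          have hr1 : Reach (x (t + 1 + d), true) := by
            have := stepRev (t + 2 + d) (by omega) (by omega)
              (by rw [show t + 2 + d = t + 1 + (d+1) from by omega]; exact hr)
            rw [show t + 2 + d - 1 = t + 1 + d from by omega] at this
            exact this
          have hr2 : Reach (x (t + 1 + d), false) :=
            stepBack (t + 1 + d) (by omega) (by omega) hr1
          exact ihd t h1 (by omega) hr2
    have hCCuniq : ∀ w w', CC w → CC w' → w = w' := by
      intro w w' hw hw'
      obtain ⟨m, hm1, hmn, rfl⟩ := (hint w).mp hw.1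
      obtain ⟨m', hm1', hmn', rfl⟩ := (hint w').mp hw'.1
      rcases Nat.lt_trichotomy m m' with h | h | h
      · exfalso
        refine hw.2.2 (desc (m' - m - 1) m hm1 (by omega) ?_)
        rw [show m + 1 + (m' - m - 1) = m' from by omega]
        exact hw'.2.1
      · rw [h]
      · exfalso
        refine hw'.2.2 (desc (m - m' - 1) m' hm1' (by omega) ?_)
        rw [show m' + 1 + (m - m' - 1) = m from by omega]
        exact hw.2.1
    obtain ⟨w₀, hw₀mem, hw₀⟩ := hCCex p hp
    have hw₀u : w₀ ≠ u := by
      obtain ⟨m, hm1, hmn, rfl⟩ := (hint w₀).mp hw₀.1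
      intro hcon
      have := hxinj m 0 (by omega) (by omega) (by rw [hcon, hx0])
      omega
    have hw₀v : w₀ ≠ v := by
      obtain ⟨m, hm1, hmn, rfl⟩ := (hint w₀).mp hw₀.1
      intro hcon
      have := hxinj m n (by omega) (by omega) (by rw [hcon, hxn])
      omega
    obtain ⟨q', hq', hq'avoid⟩ := hcut w₀ hw₀u hw₀v
    obtain ⟨w₁, hw₁mem, hw₁⟩ := hCCex q' hq'
    exact hq'avoid ((hCCuniq w₀ w₁ hw₀ hw₁) ▸ hw₁mem)
  -- Case 1: extract an injective residual walk and build two disjoint paths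
  obtain ⟨L, g, hg0, hgL, hgstep, hginj⟩ := exists_inj_walk (hreach : Relation.ReflTransGen Arc (u, true) (v, false))
  have hL1 : 1 ≤ L := by
    rcases Nat.eq_zero_or_pos L with h | h
    · exfalso
      rw [h, hg0] at hgL
      simpa using congrArg Prod.snd hgL
    · omega
  set fwdU : D.E → Prop := fun e => ∃ i, i < L ∧ g i = (D.src e, true) ∧ g (i+1) = (D.tgt e, false)
    with hfwdU
  set revU : D.E → Prop := fun e => ∃ i, i < L ∧ g i = (D.tgt e, false) ∧ g (i+1) = (D.src e, true)
    with hrevU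
  set T : Set D.E := {e | (e ∈ p ∧ ¬ revU e) ∨ (e ∉ p ∧ fwdU e)} with hTdef
  have hvisv : ∀ i, i ≤ L → g i = (v, false) → i = L := fun i hi hgi =>
    hginj i L hi (le_refl L) (by rw [hgi, hgL])
  have hvis0 : ∀ i, i ≤ L → g i = (u, true) → i = 0 := fun i hi hgi =>
    hginj i 0 hi (by omega) (by rw [hgi, hg0])
  have hD1 : ∀ i, i ≤ L → g i ≠ (u, false) := by
    intro i hi hgi
    have hiL : i ≠ L := by
      intro h
      rw [h, hgL] at hgi
      exact huv (congrArg Prod.fst hgi).symm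
    have hs := hgstep i (by omega)
    simp only [hArc] at hs
    rw [hgi] at hs
    rcases hs with ⟨h1, -, -⟩ | ⟨-, h2, h3⟩
    · exact absurd h1 (by simp)
    · rcases h3 with ⟨e, hep, hte, hse⟩ | ⟨heq, hni⟩
      · obtain ⟨k, hk, rfl⟩ := hpidx e hep
        have : k + 1 = 0 := hxinj (k+1) 0 (by omega) (by omega)
          (by rw [← htgtx k hk, hx0]; exact hte)
        omega
      · have hgi1 : g (i+1) = (u, true) := Prod.ext_iff.mpr ⟨heq.symm, h2⟩
        have := hvis0 (i+1) (by omega) hgi1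
        omega
  have hD2 : ∀ i, i ≤ L → g i ≠ (v, true) := by
    intro i hi hgi
    have hi0 : i ≠ 0 := by
      intro h
      rw [h, hg0] at hgi
      exact huv (congrArg Prod.fst hgi)
    obtain ⟨i', rfl⟩ : ∃ i', i = i' + 1 := ⟨i - 1, by omega⟩
    have hs := hgstep i' (by omega)
    simp only [hArc] at hs
    rw [hgi] at hs
    rcases hs with ⟨-, h2, -⟩ | ⟨h1, -, h3⟩
    · exact absurd h2 (by simp)
    · rcases h3 with ⟨e, hep, hte, hse⟩ | ⟨heq, hni⟩
      · obtain ⟨k, hk, rfl⟩ := hpidx e hep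
        have : k = n := hxinj k n (by omega) (by omega)
          (by rw [← hsrcx k hk, hxn]; exact hse)
        omega
      · have hgi' : g i' = (v, false) := Prod.ext_iff.mpr ⟨heq, h1⟩
        have := hvisv i' (by omega) hgi'
        omega
  have hD4 : ∀ m, 1 ≤ m → m ≤ n - 1 → ∀ i, i ≤ L → g i = (x m, true) → revU (pdg m) := by
    intro m hm1 hmn i hi hgi
    have hi0 : i ≠ 0 := by
      intro h
      rw [h, hg0] at hgi
      have : 0 = m := hxinj 0 m (by omega) (by omega)
        (by rw [hx0]; exact congrArg Prod.fst hgi)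
      omega
    obtain ⟨i', rfl⟩ : ∃ i', i = i' + 1 := ⟨i - 1, by omega⟩
    have hs := hgstep i' (by omega)
    simp only [hArc] at hs
    rw [hgi] at hs
    rcases hs with ⟨-, h2, -⟩ | ⟨h1, -, h3⟩
    · exact absurd h2 (by simp)
    · rcases h3 with ⟨e, hep, hte, hse⟩ | ⟨heq, hni⟩
      · obtain ⟨k, hk, rfl⟩ := hpidx e hep
        have hkm : k = m := hxinj k m (by omega) (by omega)
          (by rw [← hsrcx k hk]; exact hse)
        subst hkm
        refine ⟨i', by omega, Prod.ext_iff.mpr ⟨hte.symm, h1⟩, ?_⟩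
        rw [hgi]
        exact Prod.ext_iff.mpr ⟨(by rw [hsrcx k hk] : D.src (pdg k) = x k).symm, rfl⟩
      · exact absurd (show (g i').1 ∈ D.internals p by
          rw [heq]; exact hxm_int m hm1 hmn) hni
  have hD4' : ∀ m, m < n → revU (pdg m) → ∃ i, i ≤ L ∧ g i = (x m, true) := by
    rintro m hm ⟨i, hiL, h1, h2⟩
    exact ⟨i+1, by omega, by rw [h2, hsrcx m hm]⟩
  have hD5 : ∀ m, 1 ≤ m → m ≤ n - 1 → ∀ i, i ≤ L → g i = (x m, false) → revU (pdg (m-1)) := by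
    intro m hm1 hmn i hi hgi
    have hiL : i ≠ L := by
      intro h
      rw [h, hgL] at hgi
      have : n = m := hxinj n m (by omega) (by omega)
        (by rw [hxn]; exact congrArg Prod.fst hgi)
      omega
    have hs := hgstep i (by omega)
    simp only [hArc] at hs
    rw [hgi] at hs
    rcases hs with ⟨h1, -, -⟩ | ⟨-, h2, h3⟩
    · exact absurd h1 (by simp)
    · rcases h3 with ⟨e, hep, hte, hse⟩ | ⟨heq, hni⟩
      · obtain ⟨k, hk, rfl⟩ := hpidx e hep
        have hkm : k + 1 = m := hxinj (k+1) m (by omega) (by omega)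
          (by rw [← htgtx k hk]; exact hte)
        rw [show m - 1 = k from by omega]
        refine ⟨i, by omega, ?_, ?_⟩
        · rw [hgi]
          exact Prod.ext_iff.mpr ⟨hte.symm, rfl⟩
        · exact Prod.ext_iff.mpr ⟨hse.symm, h2⟩
      · exact absurd (show ((x m, false) : D.V × Bool).1 ∈ D.internals p from
          hxm_int m hm1 hmn) hni
  have hD5' : ∀ m, 1 ≤ m → m ≤ n → revU (pdg (m-1)) → ∃ i, i < L ∧ g i = (x m, false) := by
    rintro m hm1 hmn ⟨i, hiL, h1, h2⟩
    refine ⟨i, hiL, ?_⟩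
    rw [h1, htgtx (m-1) (by omega), show m - 1 + 1 = m from by omega]
  have hD8 : ¬ ∃ i, i ≤ L ∧ g i = (x (n-1), true) := by
    rintro ⟨i, hi, hgi⟩
    have hrev := hD4 (n-1) (by omega) (by omega) i hi hgi
    obtain ⟨i2, hi2L, hgi2⟩ := hD5' n (by omega) (by omega) hrev
    rw [hxn] at hgi2
    have := hvisv i2 (by omega) hgi2
    omega
  -- properties of the support set T
  have hT3 : ∀ e ∈ T, D.tgt e ≠ u := by
    intro e heT htu
    have heT' : (e ∈ p ∧ ¬ revU e) ∨ (e ∉ p ∧ fwdU e) := heT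
    rcases heT' with ⟨hep, -⟩ | ⟨-, hfw⟩
    · obtain ⟨k, hk, rfl⟩ := hpidx e hep
      have : k + 1 = 0 := hxinj (k+1) 0 (by omega) (by omega)
        (by rw [← htgtx k hk, hx0]; exact htu)
      omega
    · obtain ⟨i, hiL, h1, h2⟩ := hfw
      rw [htu] at h2
      exact hD1 (i+1) (by omega) h2
  have hT2 : ∀ e ∈ T, ∀ f ∈ T, D.tgt e = D.tgt f → D.tgt e ≠ v → e = f := by
    intro e heT f hfT htef htv
    have heT' : (e ∈ p ∧ ¬ revU e) ∨ (e ∉ p ∧ fwdU e) := heT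
    have hfT' : (f ∈ p ∧ ¬ revU f) ∨ (f ∉ p ∧ fwdU f) := hfT
    rcases heT' with ⟨hep, hrve⟩ | ⟨hnpe, hfwe⟩ <;>
      rcases hfT' with ⟨hfp, hrvf⟩ | ⟨hnpf, hfwf⟩
    · obtain ⟨k, hk, rfl⟩ := hpidx e hep
      obtain ⟨k', hk', rfl⟩ := hpidx f hfp
      have : k + 1 = k' + 1 := hxinj (k+1) (k'+1) (by omega) (by omega)
        (by rw [← htgtx k hk, ← htgtx k' hk']; exact htef)
      rw [show k = k' from by omega]
    · exfalso
      obtain ⟨k, hk, rfl⟩ := hpidx e hep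
      have hkn : k + 1 ≠ n := by
        intro hcon
        rw [htgtx k hk, hcon, hxn] at htv
        exact htv rfl
      obtain ⟨i, hiL, h1, h2⟩ := hfwf
      have hg2 : g (i+1) = (x (k+1), false) := by
        rw [h2, ← htef, htgtx k hk]
      have := hD5 (k+1) (by omega) (by omega) (i+1) (by omega) hg2
      rw [show k + 1 - 1 = k from by omega] at this
      exact hrve this
    · exfalso
      obtain ⟨k, hk, rfl⟩ := hpidx f hfp
      have hkn : k + 1 ≠ n := by
        intro hcon
        rw [htef, htgtx k hk, hcon, hxn] at htv
        exact htv rfl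
      obtain ⟨i, hiL, h1, h2⟩ := hfwe
      have hg2 : g (i+1) = (x (k+1), false) := by
        rw [h2, htef, htgtx k hk]
      have := hD5 (k+1) (by omega) (by omega) (i+1) (by omega) hg2
      rw [show k + 1 - 1 = k from by omega] at this
      exact hrvf this
    · obtain ⟨i, hiL, h1, h2⟩ := hfwe
      obtain ⟨i', hiL', h1', h2'⟩ := hfwf
      have hii : i + 1 = i' + 1 := hginj (i+1) (i'+1) (by omega) (by omega)
        (by rw [h2, h2', htef])
      have hsef : D.src e = D.src f := by
        have : g i = g i' := by rw [show i = i' from by omega]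
        rw [h1, h1'] at this
        exact congrArg Prod.fst this
      exact hsimple e f hsef htef
  -- producing an outgoing T-edge at an internal vertex x m
  have outA : ∀ m, 1 ≤ m → m ≤ n - 1 → (¬ ∃ i, i ≤ L ∧ g i = (x m, true)) →
      pdg m ∈ T ∧ D.src (pdg m) = x m := by
    intro m hm1 hmn hnvis
    refine ⟨Or.inl ⟨hpmem m (by omega), fun hrev => hnvis (hD4' m (by omega) hrev)⟩,
      hsrcx m (by omega)⟩
  have outB : ∀ m, 1 ≤ m → m ≤ n - 1 → ∀ i, i ≤ L → g i = (x m, true) →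
      (g (i+1) = (x m, false) → False) → ∃ f, f ∈ T ∧ D.src f = x m := by
    intro m hm1 hmn i hiL hgi hback
    have hm8 : m ≠ n - 1 := by
      intro h
      exact hD8 ⟨i, hiL, h ▸ hgi⟩
    have hiL' : i ≠ L := by
      intro h
      rw [h, hgL] at hgi
      simpa using congrArg Prod.snd hgi
    have hs := hgstep i (by omega)
    simp only [hArc] at hs
    rw [hgi] at hs
    rcases hs with ⟨-, h2, h3⟩ | ⟨h1, -, -⟩
    · rcases h3 with ⟨h, hsh, hth⟩ | ⟨heq, hii⟩
      · by_cases hhp : h ∈ p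
        · exfalso
          obtain ⟨k, hk, rfl⟩ := hpidx h hhp
          have hkm : k = m := hxinj k m (by omega) (by omega)
            (by rw [← hsrcx k hk]; exact hsh)
          have hg1 : g (i+1) = (x (k+1), false) :=
            Prod.ext_iff.mpr ⟨(by rw [← htgtx k hk]; exact hth.symm), h2⟩
          have hrev := hD5 (k+1) (by omega) (by omega) (i+1) (by omega) hg1
          rw [show k + 1 - 1 = k from by omega] at hrev
          obtain ⟨i2, hi2L, hh1, hh2⟩ := hrev
          have hi2 : i2 = i + 1 := hginj i2 (i+1) (by omega) (by omega)
            (by rw [hh1, hg1, htgtx k hk])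
          have : i + 1 + 1 = i := hginj (i+1+1) i (by omega) (by omega)
            (by rw [← hi2, hh2, hsrcx k hk, hkm, ← hgi])
          omega
        · refine ⟨h, Or.inr ⟨hhp, ⟨i, by omega, ?_, ?_⟩⟩, hsh⟩
          · rw [hgi]
            exact Prod.ext_iff.mpr ⟨hsh.symm, rfl⟩
          · exact Prod.ext_iff.mpr ⟨hth.symm, h2⟩
      · exact absurd (show g (i+1) = (x m, false) from Prod.ext_iff.mpr ⟨heq.symm, h2⟩)
          fun hh => hback hh
    · exact absurd h1 (by simp)
  have hT5 : ∀ e ∈ T, D.tgt e ≠ v → ∃ f, f ∈ T ∧ D.src f = D.tgt e := by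
    intro e heT htv
    have heT' : (e ∈ p ∧ ¬ revU e) ∨ (e ∉ p ∧ fwdU e) := heT
    rcases heT' with ⟨hep, hrev⟩ | ⟨hnp, hfw⟩
    · obtain ⟨k, hk, rfl⟩ := hpidx e hep
      have hmn : k + 1 ≤ n - 1 := by
        by_contra hcon
        have hkn : k + 1 = n := by omega
        rw [htgtx k hk, hkn, hxn] at htv
        exact htv rfl
      by_cases hvist : ∃ i, i ≤ L ∧ g i = (x (k+1), true)
      · obtain ⟨i, hiL, hgi⟩ := hvist
        have hiL' : i ≠ L := by
          intro h
          rw [h, hgL] at hgi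
          simpa using congrArg Prod.snd hgi
        obtain ⟨f, hfT, hfs⟩ := outB (k+1) (by omega) hmn i hiL hgi (by
          intro hb
          have := hD5 (k+1) (by omega) hmn (i+1) (by omega) hb
          rw [show k + 1 - 1 = k from by omega] at this
          exact hrev this)
        exact ⟨f, hfT, by rw [hfs, htgtx k hk]⟩
      · obtain ⟨hT', hsrc'⟩ := outA (k+1) (by omega) hmn hvist
        exact ⟨pdg (k+1), hT', by rw [hsrc', htgtx k hk]⟩
    · obtain ⟨ie, hieL, he1, he2⟩ := hfw
      by_cases hbint : D.tgt e ∈ D.internals p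
      · obtain ⟨m, hm1, hmn, hbm⟩ := (hint _).mp hbint
        by_cases hvist : ∃ i, i ≤ L ∧ g i = (x m, true)
        · obtain ⟨i, hiL, hgi⟩ := hvist
          have hiL' : i ≠ L := by
            intro h
            rw [h, hgL] at hgi
            simpa using congrArg Prod.snd hgi
          obtain ⟨f, hfT, hfs⟩ := outB m hm1 hmn i hiL hgi (by
            intro hb
            have hie2 : g (ie+1) = (x m, false) := by rw [he2, hbm]
            have h11 : i + 1 = ie + 1 := hginj (i+1) (ie+1) (by omega) (by omega)
              (by rw [hb, hie2])
            have hii : g i = (D.src e, true) := by rw [show i = ie from by omega, he1]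
            have hse : D.src e = x m := congrArg Prod.fst (hii.symm.trans hgi)
            exact hnoloop e (hse.trans hbm.symm))
          exact ⟨f, hfT, by rw [hfs, hbm]⟩
        · obtain ⟨hT', hsrc'⟩ := outA m hm1 hmn hvist
          exact ⟨pdg m, hT', by rw [hsrc', hbm]⟩
      · have hbu : D.tgt e ≠ u := hT3 e heT
        have hieL2 : ie + 1 ≠ L := by
          intro h
          rw [h, hgL] at he2
          exact htv (congrArg Prod.fst he2).symm
        have hs := hgstep (ie+1) (by omega)
        simp only [hArc] at hs
        rw [he2] at hs
        rcases hs with ⟨h1, -, -⟩ | ⟨-, h2, h3⟩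
        · exact absurd h1 (by simp)
        rcases h3 with ⟨e', hep', hte', hse'⟩ | ⟨heq, hnint⟩
        · exfalso
          obtain ⟨k, hk, rfl⟩ := hpidx e' hep'
          have hx' : x (k+1) = D.tgt e := by rw [← htgtx k hk]; exact hte'
          by_cases hkn : k + 1 = n
          · rw [hkn, hxn] at hx'
            exact htv hx'.symm
          · exact hbint (hx' ▸ hxm_int (k+1) (by omega) (by omega))
        · have hg2 : g (ie+1+1) = (D.tgt e, true) := Prod.ext_iff.mpr ⟨heq.symm, h2⟩
          have hie3 : ie + 1 + 1 ≤ L := by omega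
          have hie3' : ie + 1 + 1 ≠ L := by
            intro h
            rw [h, hgL] at hg2
            simpa using congrArg Prod.snd hg2
          have hs2 := hgstep (ie+1+1) (by omega)
          simp only [hArc] at hs2
          rw [hg2] at hs2
          rcases hs2 with ⟨-, h2', h3'⟩ | ⟨h1', -, -⟩
          · rcases h3' with ⟨h', hsh', hth'⟩ | ⟨heq', hii'⟩
            · by_cases hhp : h' ∈ p
              · exfalso
                obtain ⟨k, hk, rfl⟩ := hpidx h' hhp
                have hxk : x k = D.tgt e := by rw [← hsrcx k hk]; exact hsh'
                by_cases hk0 : k = 0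
                · rw [hk0, hx0] at hxk
                  exact hbu hxk.symm
                · exact hbint (hxk ▸ hxm_int k (by omega) (by omega))
              · refine ⟨h', Or.inr ⟨hhp, ⟨ie+1+1, by omega, ?_, ?_⟩⟩, hsh'⟩
                · rw [hg2]
                  exact Prod.ext_iff.mpr ⟨hsh'.symm, rfl⟩
                · exact Prod.ext_iff.mpr ⟨hth'.symm, h2'⟩
            · exact absurd hii' hbint
          · exact absurd h1' (by simp)
  have hfinT : T.Finite := by
    have hsub : T ⊆ {e | e ∈ p} ∪
        ⋃ i ∈ {i : ℕ | i < L}, {e | g i = (D.src e, true) ∧ g (i+1) = (D.tgt e, false)} := by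
      intro e heT
      have heT' : (e ∈ p ∧ ¬ revU e) ∨ (e ∉ p ∧ fwdU e) := heT
      rcases heT' with ⟨hep, -⟩ | ⟨-, hfw⟩
      · exact Or.inl hep
      · obtain ⟨i, hiL, h1, h2⟩ := hfw
        exact Or.inr (Set.mem_biUnion hiL ⟨h1, h2⟩)
    refine Set.Finite.subset (Set.Finite.union (List.finite_toSet p) ?_) hsub
    refine Set.Finite.biUnion (Set.finite_lt_nat L) ?_
    intro i hi
    apply Set.Subsingleton.finite
    intro e he f hf
    exact hsimple e f (congrArg Prod.fst (he.1.symm.trans hf.1))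
      (congrArg Prod.fst (he.2.symm.trans hf.2))
  -- the two starting edges at u
  have hstep0 := hgstep 0 (by omega)
  simp only [hArc] at hstep0
  rw [hg0] at hstep0
  rcases hstep0 with ⟨-, h2, h3⟩ | ⟨h1, -, -⟩
  swap
  · exact absurd h1 (by simp)
  rcases h3 with ⟨h, hsh, hth⟩ | ⟨-, hii⟩
  swap
  · exact absurd hii hu_not_int
  have hg1 : g (0+1) = (D.tgt h, false) := Prod.ext_iff.mpr ⟨hth.symm, h2⟩
  have hrev0 : ¬ revU (pdg 0) := by
    rintro ⟨i, hiL, h1', h2'⟩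
    have hgu : g (i+1) = (u, true) := by rw [h2', hsrcx 0 (by omega), hx0]
    have := hvis0 (i+1) (by omega) hgu
    omega
  have he₀T : pdg 0 ∈ T := Or.inl ⟨hpmem 0 (by omega), hrev0⟩
  have hhp : h ∉ p := by
    intro hhp
    obtain ⟨k, hk, rfl⟩ := hpidx h hhp
    have hk0 : k = 0 := hxinj k 0 (by omega) (by omega)
      (by rw [← hsrcx k hk, hx0]; exact hsh)
    subst hk0
    have hg1' : g (0+1) = (x 1, false) := by
      rw [hg1, htgtx 0 (by omega)]
    have := hD5 1 (by omega) (by omega) (0+1) (by omega) hg1'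
    rw [show (1:ℕ) - 1 = 0 from rfl] at this
    exact hrev0 this
  have hf₀T : h ∈ T := Or.inr ⟨hhp, ⟨0, by omega, by
      rw [hg0]; exact Prod.ext_iff.mpr ⟨hsh.symm, rfl⟩, hg1⟩⟩
  have hne0 : pdg 0 ≠ h := fun heq => hhp (heq ▸ hpmem 0 (by omega))
  obtain ⟨es₁, es₂, hp1, hp2, hp3, -, -, hp6⟩ :=
    extract_two_paths D u v huv T hfinT hT2 hT3 hT5 (pdg 0) h he₀T hf₀T
      (by rw [hsrcx 0 (by omega), hx0]) hsh hne0
  exact ⟨es₁, es₂, hp1, hp2, hp3, hp6⟩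

theorem walk_src_ne_tgt {D : MultiDigraph} : ∀ (es : List D.E) (a b : D.V),
    D.IsWalkFrom a b es → (D.pathVerts a es).Nodup → ∀ e ∈ es, D.src e ≠ D.tgt e := by
  intro es
  induction es with
  | nil => intro a b _ _ e he; simp at he
  | cons f tl ih =>
      intro a b hw hnd e he
      rcases List.mem_cons.mp he with rfl | htl
      · intro hst
        have h1 : D.src e = a := hw.1
        have hnotin := (List.nodup_cons.mp hnd).1
        apply hnotin
        have : a = D.tgt e := h1.symm.trans hst
        rw [this]
        simp
      · exact ih (D.tgt f) b hw.2 (List.nodup_cons.mp hnd).2 e htl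

theorem pathUnion_lift_walk {G : MultiDigraph} {u v : G.V} :
    ∀ (es' : List (G.pathUnion u v).E) (a' b' : (G.pathUnion u v).V),
      G.IsWalkFrom a'.val b'.val (es'.map Subtype.val) →
      (G.pathUnion u v).IsWalkFrom a' b' es' := by
  intro es'
  induction es' with
  | nil => intro a' b' h; exact Subtype.ext h
  | cons e tl ih =>
      intro a' b' h
      exact ⟨Subtype.ext h.1, ih _ _ h.2⟩

theorem pathUnion_pathVerts_val {G : MultiDigraph} {u v : G.V}
    (a' : (G.pathUnion u v).V) (es' : List (G.pathUnion u v).E) :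
    ((G.pathUnion u v).pathVerts a' es').map Subtype.val =
      G.pathVerts a'.val (es'.map Subtype.val) := by
  simp only [MultiDigraph.pathVerts, List.map_cons, List.map_map]
  exact congrArg (List.cons _) ((List.map_map (l := es')).trans (List.map_map (g := G.tgt) (f := Subtype.val) (l := es')).symm)

theorem pathUnion_lift_path {G : MultiDigraph} {u v : G.V} (es : List G.E)
    (h : G.IsPathFrom u v es) :
    ∃ es' : List (G.pathUnion u v).E,
      es'.map Subtype.val = es ∧
      (G.pathUnion u v).IsPathFrom (G.puSrc u v) (G.puTgt u v) es' ∧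
      ∀ f : (G.pathUnion u v).E, f.val ∈ es → f ∈ es' := by
  refine ⟨es.attach.map (fun x =>
    (⟨x.val, ⟨es, h, x.property⟩⟩ : {e // e ∈ G.pathEdges u v})), ?_, ?_, ?_⟩
  · refine List.map_map.trans ?_
    show es.attach.map (fun x => x.val) = es
    simp
  case refine_2 =>
    have hval : (es.attach.map (fun x =>
        (⟨x.val, ⟨es, h, x.property⟩⟩ : {e // e ∈ G.pathEdges u v}))).map Subtype.val = es := by
      rw [List.map_map]
      show es.attach.map (fun x => x.val) = es
      simp
    constructor
    · apply pathUnion_lift_walk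
      exact (by rw [hval]; exact h.1 : G.IsWalkFrom u v (List.map Subtype.val (es.attach.map (fun x =>
        (⟨x.val, ⟨es, h, x.property⟩⟩ : {e // e ∈ G.pathEdges u v})))))
    · have := pathUnion_pathVerts_val (G.puSrc u v)
        (es.attach.map (fun x =>
          (⟨x.val, ⟨es, h, x.property⟩⟩ : {e // e ∈ G.pathEdges u v})))
      have h2 : (G.pathVerts u (List.map Subtype.val (es.attach.map (fun x =>
          (⟨x.val, ⟨es, h, x.property⟩⟩ : {e // e ∈ G.pathEdges u v}))))).Nodup := by
        rw [hval]; exact h.2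
      refine List.Nodup.of_map Subtype.val ?_
      exact (congrArg List.Nodup this).mpr h2
  · intro f hf
    rcases f with ⟨fval, fprop⟩
    exact List.mem_map.mpr ⟨⟨fval, hf⟩, List.mem_attach _ _, rfl⟩

end MengerAux


/-- Menger-type step in Lemma 8 of Macko–Larson–Steskal: in a simple directed
graph `G`, if `H` is the union of all directed `u`–`v` paths, `H` contains no cut
vertex separating `u` from `v`, and `H` is not a chain of parallel paths, then `H`
contains two internally disjoint `u`–`v` paths. -/
theorem stmt7 (G : MultiDigraph) (u v : G.V) (huv : u ≠ v)
    (hsimple : ∀ e f : G.E, G.src e = G.src f → G.tgt e = G.tgt f → e = f)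
    (hconn : ∃ es, G.IsPathFrom u v es ∧ es ≠ [])
    (hcut : ¬ ∃ w : (G.pathUnion u v).V, w ≠ G.puSrc u v ∧ w ≠ G.puTgt u v ∧
      ∀ es, (G.pathUnion u v).IsPathFrom (G.puSrc u v) (G.puTgt u v) es →
        w ∈ (G.pathUnion u v).pathVerts (G.puSrc u v) es)
    (hnotchain : ¬ IsChainOfParallelPaths (G.pathUnion u v) (G.puSrc u v) (G.puTgt u v)) :
    ∃ es₁ es₂ : List (G.pathUnion u v).E,
      (G.pathUnion u v).IsPathFrom (G.puSrc u v) (G.puTgt u v) es₁ ∧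
      (G.pathUnion u v).IsPathFrom (G.puSrc u v) (G.puTgt u v) es₂ ∧
      es₁ ≠ es₂ ∧
      ∀ x ∈ (G.pathUnion u v).internals es₁, x ∉ (G.pathUnion u v).internals es₂ := by
  classical
  have hsimpleH : ∀ e f : (G.pathUnion u v).E,
      (G.pathUnion u v).src e = (G.pathUnion u v).src f →
      (G.pathUnion u v).tgt e = (G.pathUnion u v).tgt f → e = f := by
    intro e f h1 h2
    exact Subtype.ext (hsimple e.val f.val (congrArg Subtype.val h1) (congrArg Subtype.val h2))
  have hnoloopH : ∀ e : (G.pathUnion u v).E, (G.pathUnion u v).src e ≠ (G.pathUnion u v).tgt e := by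
    intro e heq
    obtain ⟨es, hes, hmem⟩ := e.property
    exact walk_src_ne_tgt es u v hes.1 hes.2 e.val hmem (congrArg Subtype.val heq)
  have huvH : G.puSrc u v ≠ G.puTgt u v := fun h => huv (congrArg Subtype.val h)
  obtain ⟨es0, hes0, hes0ne⟩ := hconn
  obtain ⟨es0', hval0, hpath0, -⟩ := pathUnion_lift_path es0 hes0
  have hconnH : ∃ es, (G.pathUnion u v).IsPathFrom (G.puSrc u v) (G.puTgt u v) es ∧ es ≠ [] := by
    refine ⟨es0', hpath0, ?_⟩
    intro h
    rw [h] at hval0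
    exact hes0ne hval0.symm
  have hcutH : ∀ w : (G.pathUnion u v).V, w ≠ G.puSrc u v → w ≠ G.puTgt u v →
      ∃ es, (G.pathUnion u v).IsPathFrom (G.puSrc u v) (G.puTgt u v) es ∧
        w ∉ (G.pathUnion u v).pathVerts (G.puSrc u v) es := by
    intro w hwu hwv
    by_contra hno
    push_neg at hno
    exact hcut ⟨w, hwu, hwv, fun es hes => hno es hes⟩
  by_cases hdir : ∃ ed : (G.pathUnion u v).E,
      (G.pathUnion u v).src ed = G.puSrc u v ∧ (G.pathUnion u v).tgt ed = G.puTgt u v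
  · obtain ⟨ed, hed1, hed2⟩ := hdir
    by_cases hother : ∃ f : (G.pathUnion u v).E, f ≠ ed
    · obtain ⟨f, hf⟩ := hother
      obtain ⟨esf, hesf, hmemf⟩ := f.property
      obtain ⟨esf', hvalf, hpathf, hmf⟩ := pathUnion_lift_path esf hesf
      refine ⟨[ed], esf', ?_, hpathf, ?_, ?_⟩
      · refine ⟨⟨hed1, hed2⟩, ?_⟩
        simp only [MultiDigraph.pathVerts, List.map_cons, List.map_nil]
        refine List.nodup_cons.mpr ⟨?_, List.nodup_singleton _⟩
        intro hmem
        simp only [List.mem_singleton] at hmem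
        rw [hed2] at hmem
        exact huvH hmem
      · intro heq
        have : f ∈ [ed] := heq ▸ hmf f hmemf
        simp only [List.mem_singleton] at this
        exact hf this
      · intro y hy
        simp [MultiDigraph.internals] at hy
    · exfalso
      apply hnotchain
      push_neg at hother
      have hedsrc : G.src ed.val = u := congrArg Subtype.val hed1
      have hedtgt : G.tgt ed.val = v := congrArg Subtype.val hed2
      refine ⟨G.pathUnion u v, G.puSrc u v, G.puTgt u v, id, ?_, ?_, rfl, rfl⟩
      · refine ⟨1, fun i => if i = 0 then G.puSrc u v else G.puTgt u v, by omega,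
          by simp, by simp, ?_, ?_, ?_, ?_⟩
        · intro i j hi hj hij
          interval_cases i <;> interval_cases j <;> simp_all <;>
            exact huvH (by simp_all)
        · intro y
          rcases y.property with h | h | ⟨e, he, hor⟩
          · exact ⟨0, by omega, by simp [MultiDigraph.puSrc]; exact Subtype.ext h.symm⟩
          · exact ⟨1, by omega, by simp [MultiDigraph.puTgt]; exact Subtype.ext h.symm⟩
          · have heq : (⟨e, he⟩ : (G.pathUnion u v).E) = ed := hother ⟨e, he⟩
            have heval : e = ed.val := congrArg Subtype.val heq
            rcases hor with h | h
            · refine ⟨0, by omega, ?_⟩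
              show (if (0:ℕ) = 0 then G.puSrc u v else G.puTgt u v) = y
              rw [if_pos rfl]
              exact Subtype.ext (show u = y.val by rw [← h, heval, hedsrc])
            · refine ⟨1, by omega, ?_⟩
              show (if (1:ℕ) = 0 then G.puSrc u v else G.puTgt u v) = y
              rw [if_neg (by omega)]
              exact Subtype.ext (show v = y.val by rw [← h, heval, hedtgt])
        · intro e
          refine ⟨0, by omega, ?_, ?_⟩
          · rw [hother e]
            simpa using hed1
          · rw [hother e]
            simpa using hed2
        · intro i hi
          have : i = 0 := by omega
          subst this
          exact ⟨ed, by simpa using hed1, by simpa using hed2⟩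
      · refine ⟨fun e => [e], fun a b h => h, ?_, ?_, ?_, ?_, ?_, ?_⟩
        · intro e
          refine ⟨⟨⟨rfl, rfl⟩, ?_⟩, by simp⟩
          simp only [MultiDigraph.pathVerts, List.map_cons, List.map_nil]
          refine List.nodup_cons.mpr ⟨?_, List.nodup_singleton _⟩
          intro hmem
          simp only [List.mem_singleton] at hmem
          exact hnoloopH e (id hmem)
        · intro e y hy
          simp [MultiDigraph.internals] at hy
        · intro e f hne y hy
          simp [MultiDigraph.internals] at hy
        · intro e f hne a ha hb
          simp only [List.mem_singleton] at ha hb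
          exact hne (ha ▸ hb ▸ rfl)
        · intro a
          exact ⟨a, by simp⟩
        · intro y
          exact Or.inl ⟨y, rfl⟩
  · exact menger_two (G.pathUnion u v) (G.puSrc u v) (G.puTgt u v) huvH hsimpleH hnoloopH
      hdir hconnH hcutH
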